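/- An element x ∈ F₂[[q]] satisfies T_q(x) = x if and only if x ∈ {0, 1}, and satisfies T_q(T_q(x)) = x if and only if x ∈ {0, 1, (1+q)·(1+q³)⁻¹, q·(1+q)·(1+q³)⁻¹}. In particular, the unique 2-cycle of T_q is {(1+q)·(1+q³)⁻¹, q·(1+q)·(1+q³)⁻¹}. -/

import Mathlib

open PowerSeries
open scoped Classical

/-- Shift map on `F₂[[q]]`: equals `x / q` whenever `q ∣ x`. -/
noncomputable def divq (x : PowerSeries (ZMod 2)) : PowerSeries (ZMod 2) :=
  PowerSeries.mk fun n => PowerSeries.coeff (n + 1) x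

/-- `T_{A,B}(x) = x/q` if `q ∣ x`, and `(A*x + B)/q` otherwise.  (When `A`, `B`, `x` are
all odd, `A*x + B` is divisible by `q`, so `divq` computes the true quotient there.) -/
noncomputable def Tab (A B x : PowerSeries (ZMod 2)) : PowerSeries (ZMod 2) :=
  if X ∣ x then divq x else divq (A * x + B)

private lemma divq_X_mul (f : PowerSeries (ZMod 2)) : divq (X * f) = f := by
  ext n
  simp [divq, PowerSeries.coeff_succ_X_mul]

private lemma X_mul_divq {x : PowerSeries (ZMod 2)} (hx : X ∣ x) : X * divq x = x := by
  obtain ⟨c, rfl⟩ := hx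
  rw [divq_X_mul]

private lemma two_eq_zero : (2 : PowerSeries (ZMod 2)) = 0 := by
  rw [show (2:PowerSeries (ZMod 2)) = PowerSeries.C (2 : ZMod 2) from (map_ofNat _ 2).symm,
    show (2:ZMod 2) = 0 from rfl, map_zero]

private lemma Tab_even {x : PowerSeries (ZMod 2)} (hx : X ∣ x) :
    X * Tab (1 + X) 1 x = x := by
  rw [Tab, if_pos hx]; exact X_mul_divq hx

private lemma zmod2_eq_one : ∀ c : ZMod 2, c ≠ 0 → c = 1 := by decide

private lemma Tab_odd {x : PowerSeries (ZMod 2)} (hx : ¬ X ∣ x) :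
    X * Tab (1 + X) 1 x = (1 + X) * x + 1 := by
  have hc : constantCoeff x = 1 :=
    zmod2_eq_one _ (fun h => hx (PowerSeries.X_dvd_iff.2 h))
  have hdvd : X ∣ (1 + X) * x + 1 := by
    rw [PowerSeries.X_dvd_iff]
    simp [hc]
    decide
  rw [Tab, if_neg hx]
  exact X_mul_divq hdvd

private lemma ne_zero_of_cc {y : PowerSeries (ZMod 2)}
    (hy : constantCoeff y = 1) : y ≠ 0 := by
  intro h; rw [h, map_zero] at hy; exact one_ne_zero hy.symm

/-- The fixed points of `T_q = T_{1+q,1}` are exactly `0` and `1`, and the points of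
period dividing 2 are exactly `0`, `1`, `(1+q)(1+q³)⁻¹`, `q(1+q)(1+q³)⁻¹`; in
particular the unique 2-cycle of `T_q` is `{(1+q)(1+q³)⁻¹, q(1+q)(1+q³)⁻¹}`. -/
theorem Tq_periodic_points (x : PowerSeries (ZMod 2)) :
    (Tab (1 + X) 1 x = x ↔ x ∈ ({0, 1} : Set (PowerSeries (ZMod 2)))) ∧
    (Tab (1 + X) 1 (Tab (1 + X) 1 x) = x ↔
      x ∈ ({0, 1, (1 + X) * (1 + X ^ 3)⁻¹, X * ((1 + X) * (1 + X ^ 3)⁻¹)} :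
        Set (PowerSeries (ZMod 2)))) := by
  have h2 := two_eq_zero
  set u : PowerSeries (ZMod 2) := (1 + X) * (1 + X ^ 3)⁻¹ with hu_def
  clear_value u
  -- key identity (1+X+X²)u = 1
  have hcc3 : constantCoeff ((1 : PowerSeries (ZMod 2)) + X ^ 3) ≠ 0 := by simp
  have hinv : ((1 : PowerSeries (ZMod 2)) + X ^ 3) * (1 + X ^ 3)⁻¹ = 1 :=
    PowerSeries.mul_inv_cancel _ hcc3
  have hu : (1 + X + X ^ 2) * u = 1 := by
    rw [hu_def]
    linear_combination hinv + (X + X ^ 2) * (1 + X ^ 3)⁻¹ * h2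
  have hccu : constantCoeff u = 1 := by
    rw [hu_def, map_mul, PowerSeries.constantCoeff_inv]
    simp
  -- nonzero cancellable elements
  have hne1X : (1 - X : PowerSeries (ZMod 2)) ≠ 0 :=
    ne_zero_of_cc (by simp)
  have hne1X2 : (1 - X ^ 2 : PowerSeries (ZMod 2)) ≠ 0 :=
    ne_zero_of_cc (by simp)
  have hneP : (1 + X + X ^ 2 : PowerSeries (ZMod 2)) ≠ 0 :=
    ne_zero_of_cc (by simp)
  -- computations of T on the four points
  have T0 : Tab (1 + X) 1 0 = 0 := by
    have := Tab_even (x := 0) (dvd_zero X)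
    have h' : X * Tab (1 + X) 1 0 = X * 0 := by rw [this, mul_zero]
    exact mul_left_cancel₀ PowerSeries.X_ne_zero h'
  have hnd1 : ¬ X ∣ (1 : PowerSeries (ZMod 2)) := by
    rw [PowerSeries.X_dvd_iff]; simp
  have T1 : Tab (1 + X) 1 1 = 1 := by
    have h' := Tab_odd hnd1
    apply mul_left_cancel₀ PowerSeries.X_ne_zero
    rw [h']
    linear_combination h2
  have hndu : ¬ X ∣ u := by
    rw [PowerSeries.X_dvd_iff, hccu]; exact one_ne_zero
  have Tu : Tab (1 + X) 1 u = X * u := by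
    have h' := Tab_odd hndu
    apply mul_left_cancel₀ PowerSeries.X_ne_zero
    rw [h']
    linear_combination -hu + (1 + X) * u * h2
  have TXu : Tab (1 + X) 1 (X * u) = u := by
    have h' := Tab_even (Dvd.intro u rfl)
    exact mul_left_cancel₀ PowerSeries.X_ne_zero h'
  constructor
  · constructor
    · intro h
      by_cases hx : X ∣ x
      · left
        have e1 := Tab_even hx
        rw [h] at e1
        have : (1 - X) * x = 0 := by linear_combination -e1
        exact (mul_eq_zero.mp this).resolve_left hne1X
      · right
        have e1 := Tab_odd hx
        rw [h] at e1
        -- X*x = (1+X)*x + 1  ⇒ x = 1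
        show x = 1
        linear_combination -e1 - h2
    · rintro (rfl | rfl)
      · exact T0
      · exact T1
  · constructor
    · intro h
      by_cases hx : X ∣ x
      · have e1 := Tab_even hx
        by_cases hTx : X ∣ Tab (1 + X) 1 x
        · -- even, even : x = 0
          left
          have e2 := Tab_even hTx
          rw [h] at e2
          have hz : (1 - X ^ 2) * x = 0 := by linear_combination -e1 - X * e2
          exact (mul_eq_zero.mp hz).resolve_left hne1X2
        · -- even, odd : x = X*u
          right; right; right
          have e2 := Tab_odd hTx
          rw [h] at e2
          have key : (1 + X + X ^ 2) * x = X := by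
            linear_combination X * e2 + (1 + X) * e1 + (1 + X) * x * h2
          have : (1 + X + X ^ 2) * x = (1 + X + X ^ 2) * (X * u) := by
            rw [key]; linear_combination -X * hu
          exact mul_left_cancel₀ hneP this
      · have e1 := Tab_odd hx
        by_cases hTx : X ∣ Tab (1 + X) 1 x
        · -- odd, even : x = u
          right; right; left
          have e2 := Tab_even hTx
          rw [h] at e2
          have key : (1 + X + X ^ 2) * x = 1 := by
            linear_combination -e1 - X * e2 + (X ^ 2 * x - 1) * h2
          have : (1 + X + X ^ 2) * x = (1 + X + X ^ 2) * u := by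
            rw [key, hu]
          exact mul_left_cancel₀ hneP this
        · -- odd, odd : x = 1
          right; left
          have e2 := Tab_odd hTx
          rw [h] at e2
          show x = 1
          linear_combination -X * e2 - (1 + X) * e1 - (1 + X + X * x) * h2
    · rintro (rfl | rfl | rfl | rfl)
      · rw [T0, T0]
      · rw [T1, T1]
      · rw [Tu, TXu]
      · rw [TXu, Tu]
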